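/- Let P ⊆ ℝ^d be a finite set of points in general position, and let ε > 0 be such that for every ℓ with 1 ≤ ℓ ≤ d, no affine subspace of ℝ^d of dimension ℓ − 1 intersects more than ℓ of the closed balls B_ε(x) of radius ε centered at points x ∈ P. Let H ⊆ ℝ^d be an affine hyperplane with open half-spaces H⁺ and H⁻, and let P = P⁺ ⊔ P⁻ be a partition of P such that every x ∈ P⁺ satisfies B_ε(x) ∩ H⁺ ≠ ∅ and every x ∈ P⁻ satisfies B_ε(x) ∩ H⁻ ≠ ∅. Then the convex hulls of P⁺ and P⁻ are disjoint: conv(P⁺) ∩ conv(P⁻) = ∅. -/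

import Mathlib

open Matrix Finset Metric

noncomputable section SepAux

/-- Cofactor coefficients of `n+1` vectors in `ℝ^n`. -/
def lamM {n : ℕ} (v : Fin (n+1) → Fin n → ℝ) (j : Fin (n+1)) : ℝ :=
  (-1 : ℝ)^(j : ℕ) * (Matrix.of fun (r c : Fin n) => v (j.succAbove c) r).det

lemma lamM_sum {n : ℕ} (v : Fin (n+1) → Fin n → ℝ) (k : Fin n) :
    ∑ j, lamM v j * v j k = 0 := by
  classical
  set A : Matrix (Fin (n+1)) (Fin (n+1)) ℝ :=
    Matrix.of (Fin.cons (fun c => v c k) (fun r c => v c r)) with hA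
  have hdet : A.det = 0 := by
    refine Matrix.det_zero_of_row_eq (i := (0 : Fin (n+1))) (j := k.succ)
      (Ne.symm (Fin.succ_ne_zero k)) ?_
    funext c
    simp [hA, Fin.cons_succ, Fin.cons_zero]
  have key : (0:ℝ) = ∑ j, lamM v j * v j k := by
    rw [← hdet, Matrix.det_succ_row_zero]
    refine Finset.sum_congr rfl fun j _ => ?_
    have h1 : A 0 j = v j k := by simp [hA]
    have h2 : A.submatrix Fin.succ j.succAbove
        = Matrix.of fun (r c : Fin n) => v (j.succAbove c) r := by
      ext r c; simp [hA, Fin.cons_succ]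
    rw [h1, h2, lamM]; ring
  exact key.symm

/-- Homogeneous coordinates of a point of `ℝ^d`. -/
def hcoord {d : ℕ} (x : EuclideanSpace ℝ (Fin d)) : Fin (d+1) → ℝ :=
  Fin.snoc (fun r => x r) 1

lemma euc_sum_apply {d k : ℕ} (g : Fin k → EuclideanSpace ℝ (Fin d)) (r : Fin d) :
    (∑ j, g j) r = ∑ j, g j r :=
  by rw [WithLp.ofLp_sum, Finset.sum_apply]

/-- Cofactor coefficients of an affine dependence of `d+2` points of `ℝ^d`. -/
def lamP {d : ℕ} (y : Fin (d+2) → EuclideanSpace ℝ (Fin d)) (j : Fin (d+2)) : ℝ :=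
  lamM (fun c => hcoord (y c)) j

lemma lamP_sum {d : ℕ} (y : Fin (d+2) → EuclideanSpace ℝ (Fin d)) :
    ∑ j, lamP y j = 0 := by
  have := lamM_sum (fun c => hcoord (y c)) (Fin.last d)
  simpa [lamP, hcoord, Fin.snoc_last] using this

lemma lamP_sum_smul {d : ℕ} (y : Fin (d+2) → EuclideanSpace ℝ (Fin d)) :
    ∑ j, lamP y j • y j = 0 := by
  ext r
  rw [euc_sum_apply]
  have := lamM_sum (fun c => hcoord (y c)) r.castSucc
  simpa [lamP, hcoord, Fin.snoc_castSucc, smul_eq_mul] using this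

lemma det_ne_zero_of_affineIndependent {d : ℕ} {z : Fin (d+1) → EuclideanSpace ℝ (Fin d)}
    (hz : AffineIndependent ℝ z) :
    (Matrix.of fun (r c : Fin (d+1)) => hcoord (z c) r).det ≠ 0 := by
  classical
  intro h0
  obtain ⟨v, hv, hveq⟩ := Matrix.exists_mulVec_eq_zero_iff.mpr h0
  have hrow : ∀ r : Fin (d+1), ∑ c, hcoord (z c) r * v c = 0 := by
    intro r
    have := congrFun hveq r
    simpa [Matrix.mulVec, dotProduct] using this
  have hsum : ∑ c, v c = 0 := by
    have := hrow (Fin.last d)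
    simpa [hcoord, Fin.snoc_last] using this
  have hcomb : ∑ c, v c • z c = 0 := by
    ext r
    rw [euc_sum_apply]
    have := hrow r.castSucc
    simp only [hcoord, Fin.snoc_castSucc] at this
    simpa [smul_eq_mul, mul_comm] using this
  have := affineIndependent_iff.mp hz Finset.univ v hsum hcomb
  exact hv (funext fun c => this c (Finset.mem_univ c))

lemma lamP_ne_zero {d : ℕ} {y : Fin (d+2) → EuclideanSpace ℝ (Fin d)} {j : Fin (d+2)}
    (h : AffineIndependent ℝ (fun c : Fin (d+1) => y (j.succAbove c))) :
    lamP y j ≠ 0 := by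
  have hd := det_ne_zero_of_affineIndependent h
  simp only [lamP, lamM]
  intro hc
  rcases mul_eq_zero.mp hc with h1 | h2
  · exact (pow_ne_zero _ (by norm_num : (-1:ℝ) ≠ 0)) h1
  · exact hd h2

lemma lamP_continuous {d : ℕ} (j : Fin (d+2)) :
    Continuous fun y : Fin (d+2) → EuclideanSpace ℝ (Fin d) => lamP y j := by
  apply Continuous.mul continuous_const
  apply Continuous.matrix_det
  apply continuous_matrix
  intro r c
  simp only [Matrix.of_apply, hcoord]
  induction r using Fin.lastCases with
  | last => simpa [Fin.snoc_last] using continuous_const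
  | cast r =>
      simp only [Fin.snoc_castSucc]
      exact (EuclideanSpace.proj r).continuous.comp (continuous_apply _)

/-- Any choice of points in the ε-balls around at most `d+1` distinct points of `P`
is affinely independent, given the flat condition. -/
lemma transversal_affineIndependent {d : ℕ} {P : Finset (EuclideanSpace ℝ (Fin d))} {ε : ℝ}
    (hflat : ∀ ℓ : ℕ, 1 ≤ ℓ → ℓ ≤ d →
      ∀ L : AffineSubspace ℝ (EuclideanSpace ℝ (Fin d)),
        (L : Set (EuclideanSpace ℝ (Fin d))).Nonempty →
        Module.finrank ℝ L.direction = ℓ - 1 →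
        {x ∈ (P : Set (EuclideanSpace ℝ (Fin d))) |
          ((L : Set (EuclideanSpace ℝ (Fin d))) ∩ Metric.closedBall x ε).Nonempty}.ncard ≤ ℓ)
    {k : ℕ} (hk : k ≤ d + 1) (x : Fin k → EuclideanSpace ℝ (Fin d))
    (hxP : ∀ i, x i ∈ P) (hxinj : Function.Injective x)
    (y : Fin k → EuclideanSpace ℝ (Fin d)) (hy : ∀ i, y i ∈ Metric.closedBall (x i) ε) :
    AffineIndependent ℝ y := by
  classical
  by_contra hdep
  have hk2 : 2 ≤ k := by
    by_contra hlt
    push_neg at hlt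
    interval_cases k
    · exact hdep (affineIndependent_of_subsingleton ℝ y)
    · exact hdep (affineIndependent_of_subsingleton ℝ y)
  obtain ⟨k', rfl⟩ : ∃ k', k = k' + 2 := ⟨k - 2, by omega⟩
  set L := affineSpan ℝ (Set.range y) with hL
  set m := Module.finrank ℝ (vectorSpan ℝ (Set.range y)) with hm
  have hmle : m ≤ k' :=
    (finrank_vectorSpan_le_iff_not_affineIndependent ℝ y (by simp)).mpr hdep
  have hLdir : Module.finrank ℝ L.direction = (m + 1) - 1 := by
    rw [hL, direction_affineSpan, hm]
    omega
  have hLne : (L : Set (EuclideanSpace ℝ (Fin d))).Nonempty :=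
    (affineSpan_nonempty ℝ).mpr (Set.range_nonempty y)
  have happ := hflat (m+1) (by omega) (by omega) L hLne hLdir
  have hsub : Set.range x ⊆ {x' ∈ (P : Set (EuclideanSpace ℝ (Fin d))) |
      ((L : Set (EuclideanSpace ℝ (Fin d))) ∩ Metric.closedBall x' ε).Nonempty} := by
    rintro _ ⟨i, rfl⟩
    refine ⟨hxP i, y i, ?_, hy i⟩
    exact subset_affineSpan ℝ _ (Set.mem_range_self i)
  have hfin : {x' ∈ (P : Set (EuclideanSpace ℝ (Fin d))) |
      ((L : Set (EuclideanSpace ℝ (Fin d))) ∩ Metric.closedBall x' ε).Nonempty}.Finite :=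
    P.finite_toSet.subset (fun a ha => ha.1)
  have hrange : (Set.range x).ncard = k' + 2 := by
    rw [← Set.image_univ, Set.ncard_image_of_injective _ hxinj, Set.ncard_univ]
    simp
  have := Set.ncard_le_ncard hsub hfin
  omega

/-- Any injective family of at most `d+1` points of `P` is affinely independent. -/
lemma indep_of_mem {d : ℕ} {P : Finset (EuclideanSpace ℝ (Fin d))}
    (hgp : ∀ s : Finset (EuclideanSpace ℝ (Fin d)), s ⊆ P → s.card ≤ d + 1 →
      AffineIndependent ℝ (fun p : (s : Set (EuclideanSpace ℝ (Fin d))) =>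
        (p : EuclideanSpace ℝ (Fin d))))
    {ι : Type} [Fintype ι] (g : ι → EuclideanSpace ℝ (Fin d))
    (hinj : Function.Injective g) (hmem : ∀ i, g i ∈ P)
    (hcard : Fintype.card ι ≤ d + 1) : AffineIndependent ℝ g := by
  classical
  set s : Finset (EuclideanSpace ℝ (Fin d)) := Finset.univ.image g with hs
  have hsP : s ⊆ P := by
    intro a ha
    rw [hs, Finset.mem_image] at ha
    obtain ⟨i, _, rfl⟩ := ha
    exact hmem i
  have hscard : s.card ≤ d + 1 := by
    rw [hs, Finset.card_image_of_injective _ hinj]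
    simpa using hcard
  have hai := hgp s hsP hscard
  have hmem' : ∀ i, g i ∈ (s : Set (EuclideanSpace ℝ (Fin d))) := by
    intro i
    simp [hs]
  exact hai.comp_embedding
    ⟨fun i => (⟨g i, hmem' i⟩ : (s : Set (EuclideanSpace ℝ (Fin d)))),
      fun i j hij => hinj (congrArg Subtype.val hij)⟩

/-- The affine embedding `x ↦ (x, 1)`. -/
def embP {d : ℕ} : EuclideanSpace ℝ (Fin d) →ᵃ[ℝ] (EuclideanSpace ℝ (Fin d)) × ℝ where
  toFun x := (x, 1)
  linear := LinearMap.inl ℝ _ _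
  map_vadd' p v := by simp [Prod.ext_iff]

/-- The affine embedding `x ↦ (-x, -1)`. -/
def embM {d : ℕ} : EuclideanSpace ℝ (Fin d) →ᵃ[ℝ] (EuclideanSpace ℝ (Fin d)) × ℝ where
  toFun x := (-x, -1)
  linear := -(LinearMap.inl ℝ _ _)
  map_vadd' p v := by
    simp [Prod.ext_iff]
    abel

end SepAux

set_option maxHeartbeats 1000000 in
/-- **Separation lemma.**
Let `P ⊆ ℝ^d` be a finite set of points in general position and `ε > 0` such that for every
`ℓ` with `1 ≤ ℓ ≤ d`, no affine subspace of dimension `ℓ - 1` intersects more than `ℓ` of the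
closed `ε`-balls centered at points of `P`.  Let `H` be the affine hyperplane given as the
zero set of a nonconstant affine functional `f`, with open half-spaces `H⁺ = {f > 0}` and
`H⁻ = {f < 0}`, and let `P = P⁺ ⊔ P⁻` be a partition such that every ball around a point of
`P⁺` meets `H⁺` and every ball around a point of `P⁻` meets `H⁻`.  Then
`conv(P⁺) ∩ conv(P⁻) = ∅`. -/
theorem convex_hulls_disjoint_of_balls_meet_halfspaces
    (d : ℕ)
    (P Pp Pm : Finset (EuclideanSpace ℝ (Fin d)))
    (hgp : ∀ s : Finset (EuclideanSpace ℝ (Fin d)), s ⊆ P → s.card ≤ d + 1 →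
      AffineIndependent ℝ (fun p : (s : Set (EuclideanSpace ℝ (Fin d))) =>
        (p : EuclideanSpace ℝ (Fin d))))
    (ε : ℝ) (hε : 0 < ε)
    (hflat : ∀ ℓ : ℕ, 1 ≤ ℓ → ℓ ≤ d →
      ∀ L : AffineSubspace ℝ (EuclideanSpace ℝ (Fin d)),
        (L : Set (EuclideanSpace ℝ (Fin d))).Nonempty →
        Module.finrank ℝ L.direction = ℓ - 1 →
        {x ∈ (P : Set (EuclideanSpace ℝ (Fin d))) |
          ((L : Set (EuclideanSpace ℝ (Fin d))) ∩ Metric.closedBall x ε).Nonempty}.ncard ≤ ℓ)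
    (f : EuclideanSpace ℝ (Fin d) →ᵃ[ℝ] ℝ) (hf : f.linear ≠ 0)
    (hdisj : Disjoint Pp Pm)
    (hunion : (Pp : Set (EuclideanSpace ℝ (Fin d))) ∪ (Pm : Set (EuclideanSpace ℝ (Fin d)))
      = (P : Set (EuclideanSpace ℝ (Fin d))))
    (hPp : ∀ x ∈ Pp, ∃ y ∈ Metric.closedBall x ε, 0 < f y)
    (hPm : ∀ x ∈ Pm, ∃ y ∈ Metric.closedBall x ε, f y < 0) :
    convexHull ℝ (Pp : Set (EuclideanSpace ℝ (Fin d))) ∩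
      convexHull ℝ (Pm : Set (EuclideanSpace ℝ (Fin d))) = ∅ := by
  classical
  -- dispatch d = 0
  rcases Nat.eq_zero_or_pos d with hd0 | hdpos
  · exfalso
    apply hf
    ext x
    have hx : x = 0 := by
      subst hd0
      ext i
      exact i.elim0
    rw [hx]
    simp
  by_contra hne
  obtain ⟨z, hzp, hzm⟩ := Set.nonempty_iff_ne_empty.mpr hne
  -- move to EuclideanSpace ℝ (Fin d) × ℝ
  set S : Set (EuclideanSpace ℝ (Fin d) × ℝ) := embP '' (Pp : Set (EuclideanSpace ℝ (Fin d))) ∪ embM '' (Pm : Set (EuclideanSpace ℝ (Fin d))) with hS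
  have h0S : (0 : EuclideanSpace ℝ (Fin d) × ℝ) ∈ convexHull ℝ S := by
    have h1 : embP z ∈ convexHull ℝ (embP '' (Pp : Set (EuclideanSpace ℝ (Fin d)))) := by
      rw [← AffineMap.image_convexHull]
      exact Set.mem_image_of_mem _ hzp
    have h2 : embM z ∈ convexHull ℝ (embM '' (Pm : Set (EuclideanSpace ℝ (Fin d)))) := by
      rw [← AffineMap.image_convexHull]
      exact Set.mem_image_of_mem _ hzm
    have h1' : embP z ∈ convexHull ℝ S :=
      convexHull_mono (Set.subset_union_left) h1
    have h2' : embM z ∈ convexHull ℝ S :=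
      convexHull_mono (Set.subset_union_right) h2
    have hmem := (convex_convexHull ℝ S) h1' h2'
      (by norm_num : (0:ℝ) ≤ 1/2) (by norm_num : (0:ℝ) ≤ 1/2) (by norm_num)
    have hval : (1/2 : ℝ) • embP z + (1/2 : ℝ) • embM z = (0 : EuclideanSpace ℝ (Fin d) × ℝ) := by
      show (1/2 : ℝ) • ((z, 1) : EuclideanSpace ℝ (Fin d) × ℝ) + (1/2 : ℝ) • ((-z, -1) : EuclideanSpace ℝ (Fin d) × ℝ) = 0
      rw [Prod.smul_mk, Prod.smul_mk, Prod.mk_add_mk]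
      rw [Prod.ext_iff]
      constructor
      · show (1/2 : ℝ) • z + (1/2 : ℝ) • (-z) = 0
        module
      · norm_num
    rwa [hval] at hmem
  -- Caratheodory
  rw [convexHull_eq_union] at h0S
  simp only [Set.mem_iUnion] at h0S
  obtain ⟨T, hTS, hTai, h0T⟩ := h0S
  have hTcard : T.card ≤ d + 2 := by
    have h1 := hTai.card_le_finrank_succ
    have h2 := Submodule.finrank_le (vectorSpan ℝ (Set.range
        (Subtype.val : {x // x ∈ T} → EuclideanSpace ℝ (Fin d) × ℝ)))
    rw [Module.finrank_prod, finrank_euclideanSpace_fin, Module.finrank_self] at h2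
    have h3 : Fintype.card {x // x ∈ T} = T.card := Fintype.card_coe T
    omega
  rw [Finset.convexHull_eq] at h0T
  obtain ⟨w, hw0, hw1, hwc⟩ := h0T
  have hsum0 : ∑ t ∈ T, w t • t = (0 : EuclideanSpace ℝ (Fin d) × ℝ) := by
    rw [Finset.centerMass_eq_of_sum_1 _ _ hw1] at hwc
    simpa using hwc
  -- restrict to nonzero weights
  set T₁ : Finset (EuclideanSpace ℝ (Fin d) × ℝ) := T.filter (fun t => w t ≠ 0) with hT₁
  have hT₁T : T₁ ⊆ T := Finset.filter_subset _ _
  have hT1sum1 : ∑ t ∈ T₁, w t = 1 := by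
    rw [hT₁, Finset.sum_filter_of_ne (fun t _ h => h)]
    exact hw1
  have hT1sum0 : ∑ t ∈ T₁, w t • t = (0 : EuclideanSpace ℝ (Fin d) × ℝ) := by
    rw [hT₁, Finset.sum_filter_of_ne]
    · exact hsum0
    · intro t _ h
      intro hw
      apply h
      rw [hw, zero_smul]
  have hT1pos : ∀ t ∈ T₁, 0 < w t := by
    intro t ht
    rw [hT₁, Finset.mem_filter] at ht
    exact lt_of_le_of_ne (hw0 t ht.1) (Ne.symm ht.2)
  -- classify the points of T
  set ctr : EuclideanSpace ℝ (Fin d) × ℝ → EuclideanSpace ℝ (Fin d) := fun t => t.2 • t.1 with hctr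
  have hclass : ∀ t ∈ T, (t.2 = 1 ∧ ctr t ∈ Pp) ∨ (t.2 = -1 ∧ ctr t ∈ Pm) := by
    intro t ht
    rcases hTS ht with ⟨a, ha, rfl⟩ | ⟨b, hb, rfl⟩
    · left
      constructor
      · rfl
      · show (1:ℝ) • a ∈ Pp
        rw [one_smul]
        exact ha
    · right
      constructor
      · rfl
      · show (-1:ℝ) • (-b) ∈ Pm
        rw [neg_smul, one_smul, neg_neg]
        exact hb
  have hctrP : ∀ t ∈ T, ctr t ∈ P := by
    intro t ht
    rcases hclass t ht with ⟨_, h⟩ | ⟨_, h⟩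
    · rw [← Finset.mem_coe, ← hunion]
      exact Or.inl h
    · rw [← Finset.mem_coe, ← hunion]
      exact Or.inr h
  have hctrinj : ∀ t ∈ T, ∀ t' ∈ T, ctr t = ctr t' → t = t' := by
    intro t ht t' ht' hc
    rcases hclass t ht with ⟨h1, h2⟩ | ⟨h1, h2⟩ <;>
      rcases hclass t' ht' with ⟨h1', h2'⟩ | ⟨h1', h2'⟩
    · have : t.1 = t'.1 := by
        have := hc
        rw [hctr] at this
        simp only [h1, h1', one_smul] at this
        exact this
      exact Prod.ext this (h1.trans h1'.symm)
    · exfalso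
      rw [hc] at h2
      exact (Finset.disjoint_left.mp hdisj) h2 h2'
    · exfalso
      rw [hc] at h2
      exact (Finset.disjoint_left.mp hdisj) h2' h2
    · have : t.1 = t'.1 := by
        have := hc
        rw [hctr] at this
        simp only [h1, h1', neg_smul, one_smul, neg_inj] at this
        exact this
      exact Prod.ext this (h1.trans h1'.symm)
  -- coordinates of the sum
  have hsnd : ∑ t ∈ T₁, t.2 * w t = 0 := by
    have := congrArg Prod.snd hT1sum0
    rw [Prod.snd_sum] at this
    simpa [mul_comm] using this
  have hfst : ∑ t ∈ T₁, w t • t.1 = (0 : EuclideanSpace ℝ (Fin d)) := by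
    have := congrArg Prod.fst hT1sum0
    rw [Prod.fst_sum] at this
    simpa using this
  have hfst' : ∑ t ∈ T₁, (t.2 * w t) • ctr t = (0 : EuclideanSpace ℝ (Fin d)) := by
    rw [← hfst]
    refine Finset.sum_congr rfl fun t ht => ?_
    rcases hclass t (hT₁T ht) with ⟨h1, _⟩ | ⟨h1, _⟩ <;>
      simp [hctr, h1, smul_smul]
  -- T₁ has at least d+2 elements
  have hT1large : d + 2 ≤ T₁.card := by
    by_contra hlt
    push_neg at hlt
    have hcard : Fintype.card { t // t ∈ T₁ } ≤ d + 1 := by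
      rw [Fintype.card_coe]
      omega
    have hginj : Function.Injective (fun t : { t // t ∈ T₁ } => ctr (t : EuclideanSpace ℝ (Fin d) × ℝ)) := by
      intro t t' h
      exact Subtype.ext (hctrinj _ (hT₁T t.2) _ (hT₁T t'.2) h)
    have hgai := indep_of_mem hgp (fun t : { t // t ∈ T₁ } => ctr (t : EuclideanSpace ℝ (Fin d) × ℝ)) hginj
      (fun t => hctrP _ (hT₁T t.2)) hcard
    have hνsum : ∑ t : { t // t ∈ T₁ }, ((t : EuclideanSpace ℝ (Fin d) × ℝ).2 * w (t : EuclideanSpace ℝ (Fin d) × ℝ)) = 0 := by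
      rw [Finset.sum_coe_sort T₁ (fun t => t.2 * w t)]
      exact hsnd
    have hνsmul : ∑ t : { t // t ∈ T₁ }, ((t : EuclideanSpace ℝ (Fin d) × ℝ).2 * w (t : EuclideanSpace ℝ (Fin d) × ℝ)) • ctr (t : EuclideanSpace ℝ (Fin d) × ℝ)
        = (0 : EuclideanSpace ℝ (Fin d)) := by
      rw [Finset.sum_coe_sort T₁ (fun t => (t.2 * w t) • ctr t)]
      exact hfst'
    have hall := affineIndependent_iff.mp hgai Finset.univ _ hνsum hνsmul
    have hT1ne : T₁.Nonempty := by
      rcases Finset.eq_empty_or_nonempty T₁ with h | h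
      · rw [h] at hT1sum1
        simp at hT1sum1
      · exact h
    obtain ⟨t0, ht0⟩ := hT1ne
    have hz0 := hall ⟨t0, ht0⟩ (Finset.mem_univ _)
    have hwt0 := hT1pos t0 ht0
    rcases hclass t0 (hT₁T ht0) with ⟨h1, _⟩ | ⟨h1, _⟩ <;>
    · rw [h1] at hz0
      simp at hz0
      linarith
  -- enumeration of T₁
  have hT1card : T₁.card = d + 2 :=
    le_antisymm (le_trans (Finset.card_le_card hT₁T) hTcard) hT1large
  have hcardeq : Fintype.card {t // t ∈ T₁} = d + 2 := by
    rw [Fintype.card_coe]; exact hT1card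
  set e : Fin (d+2) ≃ {t // t ∈ T₁} := (Fintype.equivFinOfCardEq hcardeq).symm with he
  set pt : Fin (d+2) → EuclideanSpace ℝ (Fin d) :=
    fun i => ctr ((e i : EuclideanSpace ℝ (Fin d) × ℝ)) with hpt
  set μ : Fin (d+2) → ℝ :=
    fun i => ((e i : EuclideanSpace ℝ (Fin d) × ℝ)).2 * w ((e i : EuclideanSpace ℝ (Fin d) × ℝ))
    with hμdef
  have hptinj : Function.Injective pt := by
    intro i j h
    apply e.injective
    apply Subtype.ext
    exact hctrinj _ (hT₁T (e i).2) _ (hT₁T (e j).2) h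
  have hptP : ∀ i, pt i ∈ P := fun i => hctrP _ (hT₁T (e i).2)
  have hμsum : ∑ i, μ i = 0 := by
    have h : ∑ i, μ i = ∑ t ∈ T₁, t.2 * w t :=
      (Equiv.sum_comp e fun t : {t // t ∈ T₁} =>
        ((t : EuclideanSpace ℝ (Fin d) × ℝ)).2 * w (t : EuclideanSpace ℝ (Fin d) × ℝ)).trans
        (Finset.sum_coe_sort T₁ fun t => t.2 * w t)
    rw [h]
    exact hsnd
  have hμsmul : ∑ i, μ i • pt i = (0 : EuclideanSpace ℝ (Fin d)) := by
    have h : ∑ i, μ i • pt i = ∑ t ∈ T₁, (t.2 * w t) • ctr t :=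
      (Equiv.sum_comp e fun t : {t // t ∈ T₁} =>
        (((t : EuclideanSpace ℝ (Fin d) × ℝ)).2 * w (t : EuclideanSpace ℝ (Fin d) × ℝ)) •
          ctr (t : EuclideanSpace ℝ (Fin d) × ℝ)).trans
        (Finset.sum_coe_sort T₁ fun t => (t.2 * w t) • ctr t)
    rw [h]
    exact hfst'
  have hμsign : ∀ i, (0 < μ i ∧ pt i ∈ Pp) ∨ (μ i < 0 ∧ pt i ∈ Pm) := by
    intro i
    have ht := (e i).2
    have hw' := hT1pos _ ht
    rcases hclass _ (hT₁T ht) with ⟨h1, h2⟩ | ⟨h1, h2⟩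
    · left
      refine ⟨?_, h2⟩
      simp only [hμdef]
      rw [h1, one_mul]
      exact hw'
    · right
      refine ⟨?_, h2⟩
      simp only [hμdef]
      rw [h1]
      simpa using hw'
  have hμne : ∀ i, μ i ≠ 0 := by
    intro i
    rcases hμsign i with ⟨h, _⟩ | ⟨h, _⟩
    · exact ne_of_gt h
    · exact ne_of_lt h
  -- choose the transversal q
  have hq : ∀ i, ∃ y, y ∈ Metric.closedBall (pt i) ε ∧ 0 < f y * μ i := by
    intro i
    rcases hμsign i with ⟨hμp, hmem⟩ | ⟨hμn, hmem⟩
    · obtain ⟨y, hy, hfy⟩ := hPp _ hmem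
      exact ⟨y, hy, mul_pos hfy hμp⟩
    · obtain ⟨y, hy, hfy⟩ := hPm _ hmem
      exact ⟨y, hy, mul_pos_of_neg_of_neg hfy hμn⟩
  choose q hq1 hq2 using hq
  -- transversal independence and nonvanishing of the cofactors
  have hindep : ∀ y : Fin (d+2) → EuclideanSpace ℝ (Fin d),
      (∀ i, y i ∈ Metric.closedBall (pt i) ε) →
      ∀ j : Fin (d+2), AffineIndependent ℝ (fun c : Fin (d+1) => y (j.succAbove c)) := by
    intro y hy j
    exact transversal_affineIndependent hflat (le_refl (d+1)) (fun c => pt (j.succAbove c))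
      (fun c => hptP _) (hptinj.comp (Fin.succAbove_right_injective))
      _ (fun c => hy _)
  have hlam_ne : ∀ y : Fin (d+2) → EuclideanSpace ℝ (Fin d),
      (∀ i, y i ∈ Metric.closedBall (pt i) ε) → ∀ j, lamP y j ≠ 0 :=
    fun y hy j => lamP_ne_zero (hindep y hy j)
  -- the box of transversals is connected
  set Ω : Set (Fin (d+2) → EuclideanSpace ℝ (Fin d)) :=
    Set.pi Set.univ (fun i => Metric.closedBall (pt i) ε) with hΩ
  have hΩconn : IsPreconnected Ω :=
    (convex_pi (fun i _ => convex_closedBall _ _)).isPreconnected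
  have hptΩ : pt ∈ Ω := fun i _ => Metric.mem_closedBall_self hε.le
  have hqΩ : q ∈ Ω := fun i _ => hq1 i
  have hmemball : ∀ y : Fin (d+2) → EuclideanSpace ℝ (Fin d), y ∈ Ω →
      ∀ i, y i ∈ Metric.closedBall (pt i) ε := fun y hy i => hy i (Set.mem_univ i)
  -- constancy of signs over the box
  have hsame : ∀ j, 0 < lamP pt j * lamP q j := by
    intro j
    have h1 := hlam_ne pt (hmemball pt hptΩ) j
    have h2 := hlam_ne q (hmemball q hqΩ) j
    by_contra hle
    push_neg at hle
    have hlt : lamP pt j * lamP q j < 0 := lt_of_le_of_ne hle (mul_ne_zero h1 h2)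
    rcases lt_or_gt_of_ne h1 with hneg | hpos
    · have hq' : 0 < lamP q j := by nlinarith
      have h0 : (0:ℝ) ∈ Set.Icc (lamP pt j) (lamP q j) := ⟨hneg.le, hq'.le⟩
      obtain ⟨y, hyΩ, hy0⟩ := hΩconn.intermediate_value hptΩ hqΩ
        ((lamP_continuous j).continuousOn) h0
      exact hlam_ne y (hmemball y hyΩ) j hy0
    · have hq' : lamP q j < 0 := by nlinarith
      have h0 : (0:ℝ) ∈ Set.Icc (lamP q j) (lamP pt j) := ⟨hq'.le, hpos.le⟩
      obtain ⟨y, hyΩ, hy0⟩ := hΩconn.intermediate_value hqΩ hptΩ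
        ((lamP_continuous j).continuousOn) h0
      exact hlam_ne y (hmemball y hyΩ) j hy0
  -- proportionality of μ and lamP pt
  have hsuccai : AffineIndependent ℝ
      (fun c : Fin (d+1) => pt ((0 : Fin (d+2)).succAbove c)) :=
    hindep pt (hmemball pt hptΩ) 0
  set wj : Fin (d+2) → ℝ := fun j => lamP pt 0 * μ j - μ 0 * lamP pt j with hwj
  have hwj0 : wj 0 = 0 := by simp only [hwj]; ring
  have hwsum : ∑ j, wj j = 0 := by
    simp only [hwj]
    rw [Finset.sum_sub_distrib, ← Finset.mul_sum, ← Finset.mul_sum, hμsum, lamP_sum]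
    ring
  have hwsmul : ∑ j, wj j • pt j = (0 : EuclideanSpace ℝ (Fin d)) := by
    have hterm : ∀ j, wj j • pt j
        = lamP pt 0 • (μ j • pt j) - μ 0 • (lamP pt j • pt j) := by
      intro j
      simp only [hwj]
      module
    rw [Finset.sum_congr rfl (fun j _ => hterm j), Finset.sum_sub_distrib,
      ← Finset.smul_sum, ← Finset.smul_sum, hμsmul, lamP_sum_smul, smul_zero, smul_zero,
      sub_zero]
  have hsum' : ∑ c : Fin (d+1), wj ((0 : Fin (d+2)).succAbove c) = 0 := by
    have hs := Fin.sum_univ_succ wj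
    rw [hwsum, hwj0, zero_add] at hs
    simp only [Fin.zero_succAbove]
    exact hs.symm
  have hsmul' : ∑ c : Fin (d+1),
      wj ((0 : Fin (d+2)).succAbove c) • pt ((0 : Fin (d+2)).succAbove c)
      = (0 : EuclideanSpace ℝ (Fin d)) := by
    have hs := Fin.sum_univ_succ (fun j => wj j • pt j)
    rw [hwsmul, hwj0, zero_smul, zero_add] at hs
    simp only [Fin.zero_succAbove]
    exact hs.symm
  have hallz := affineIndependent_iff.mp hsuccai Finset.univ
    (fun c => wj ((0 : Fin (d+2)).succAbove c)) hsum' hsmul'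
  have hprop : ∀ j, lamP pt 0 * μ j = μ 0 * lamP pt j := by
    intro j
    rcases eq_or_ne j 0 with rfl | hj
    · ring
    · obtain ⟨c, rfl⟩ := Fin.exists_succAbove_eq hj
      have hz := hallz c (Finset.mem_univ c)
      simp only [hwj] at hz
      linarith [hz]
  -- final contradiction
  have hkey : ∀ j, 0 < (lamP pt 0 * μ 0) * (lamP q j * f (q j)) := by
    intro j
    have h1 := hsame j
    have h2 := hprop j
    have h3 := hq2 j
    have hm2 : 0 < (μ j)^2 := pow_two_pos_of_ne_zero (hμne j)
    have hm02 : 0 < (μ 0)^2 := pow_two_pos_of_ne_zero (hμne 0)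
    have hid : (lamP pt 0 * μ 0 * (lamP q j * f (q j))) * (μ j)^2
        = (μ 0)^2 * ((lamP pt j * lamP q j) * (f (q j) * μ j)) := by
      linear_combination (μ 0 * lamP q j * f (q j) * μ j) * h2
    have hrhs : 0 < (μ 0)^2 * ((lamP pt j * lamP q j) * (f (q j) * μ j)) :=
      mul_pos hm02 (mul_pos h1 h3)
    by_contra hX
    push_neg at hX
    nlinarith [hid, hrhs, sq_nonneg (μ j)]
  have hdec : ∀ x, f x = f.linear x + f 0 := by
    intro x
    conv_lhs => rw [f.decomp]
    simp
  have hzero : ∑ j, lamP q j * f (q j) = 0 := by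
    calc ∑ j, lamP q j * f (q j)
        = ∑ j, (f.linear (lamP q j • q j) + lamP q j * f 0) := by
          refine Finset.sum_congr rfl fun j _ => ?_
          rw [hdec (q j), LinearMap.map_smul, smul_eq_mul]
          ring
      _ = f.linear (∑ j, lamP q j • q j) + (∑ j, lamP q j) * f 0 := by
          rw [Finset.sum_add_distrib, map_sum, Finset.sum_mul]
      _ = 0 := by
          rw [lamP_sum_smul, lamP_sum, map_zero, zero_mul, add_zero]
  have hfinal : 0 < ∑ j, (lamP pt 0 * μ 0) * (lamP q j * f (q j)) :=
    Finset.sum_pos (fun j _ => hkey j) Finset.univ_nonempty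
  rw [← Finset.mul_sum, hzero, mul_zero] at hfinal
  exact lt_irrefl 0 hfinal
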